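/- Let H1(ā(1)), H0(ā(1)), Q1(ā(1)), Q0(a(0)) be the confounding bridge functions satisfying the latent-level bridge equations of the two-occasion proximal framework, and define for each ā(1) ∈ 𝒜 the quantity Ξ_{ā(1)} = 1{Ā(1)=ā(1)} Q1(ā(1)) [Y − H1(ā(1))] + 1{A(0)=a(0)} Q0(a(0)) [H1(ā(1)) − H0(ā(1))] + H0(ā(1)). Then E[Ξ_{ā(1)} | V] = E[Y_{ā(1)} | V], so that under the MSMM E[Y_{ā(1)}|V] = g(ā(1), V; β*), the moment condition E[ Σ_{ā(1)∈𝒜} d(ā(1), V) (Ξ_{ā(1)} − g(ā(1), V; β*)) ] = 0 holds for every measurable d. -/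
import Mathlib


open Finset MeasureTheory

open scoped Classical

/-- Probability of an event on a finite outcome space with mass function `p`. -/
noncomputable def pr {Ω : Type*} [Fintype Ω] (p : Ω → ℝ) (E : Ω → Prop) : ℝ :=
  ∑ ω, if E ω then p ω else 0

/-- Conditional expectation `E[f | E]` on a finite outcome space. -/
noncomputable def cexp {Ω : Type*} [Fintype Ω] (p : Ω → ℝ) (f : Ω → ℝ) (E : Ω → Prop) : ℝ :=
  (∑ ω, if E ω then p ω * f ω else 0) / pr p E

/-- Conditional probability `P(E | F)` on a finite outcome space. -/
noncomputable def cprob {Ω : Type*} [Fintype Ω] (p : Ω → ℝ) (E F : Ω → Prop) : ℝ :=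
  pr p (fun ω => E ω ∧ F ω) / pr p F

/-- Expectation on a finite outcome space. -/
noncomputable def pexp {Ω : Type*} [Fintype Ω] (p : Ω → ℝ) (f : Ω → ℝ) : ℝ :=
  ∑ ω, p ω * f ω

/-- `S` is conditionally independent of `T` given `C`:  for every pair of (bounded) test
functions `F, G` and every value `c` of `C` with positive probability, the conditional
expectation of the product factorizes. -/
def CondIndep {Ω α β γ : Type*} [Fintype Ω] (p : Ω → ℝ)
    (S : Ω → α) (T : Ω → β) (C : Ω → γ) : Prop :=
  ∀ (F : α → ℝ) (G : β → ℝ) (c : γ), pr p (fun ω => C ω = c) ≠ 0 →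
    cexp p (fun ω => F (S ω) * G (T ω)) (fun ω => C ω = c) =
      cexp p (fun ω => F (S ω)) (fun ω => C ω = c) *
        cexp p (fun ω => G (T ω)) (fun ω => C ω = c)

section helpers
variable {Ω : Type*} [Fintype Ω] {p : Ω → ℝ}

/-- unnormalized conditional mass -/
noncomputable def mu (p : Ω → ℝ) (E : Ω → Prop) (f : Ω → ℝ) : ℝ :=
  ∑ ω, if E ω then p ω * f ω else 0

lemma cexp_def (f : Ω → ℝ) (E : Ω → Prop) : cexp p f E = mu p E f / pr p E := rfl

lemma pr_congr {E E' : Ω → Prop} (h : ∀ ω, E ω ↔ E' ω) : pr p E = pr p E' :=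
  Finset.sum_congr rfl fun ω _ => by rw [if_congr (h ω) rfl rfl]

lemma mu_congr {E E' : Ω → Prop} {f g : Ω → ℝ} (hE : ∀ ω, E ω ↔ E' ω)
    (hf : ∀ ω, E' ω → f ω = g ω) : mu p E f = mu p E' g := by
  refine Finset.sum_congr rfl fun ω _ => ?_
  by_cases h : E' ω
  · rw [if_pos ((hE ω).mpr h), if_pos h, hf ω h]
  · rw [if_neg (fun hh => h ((hE ω).mp hh)), if_neg h]

lemma cexp_congr {E E' : Ω → Prop} {f g : Ω → ℝ} (hE : ∀ ω, E ω ↔ E' ω)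
    (hf : ∀ ω, E' ω → f ω = g ω) : cexp p f E = cexp p g E' := by
  rw [cexp_def, cexp_def, mu_congr hE hf, pr_congr hE]

lemma mu_sub (E : Ω → Prop) (f g : Ω → ℝ) :
    mu p E (fun ω => f ω - g ω) = mu p E f - mu p E g := by
  unfold mu
  rw [← Finset.sum_sub_distrib]
  refine Finset.sum_congr rfl fun ω _ => ?_
  by_cases h : E ω <;> simp [h, mul_sub]

lemma mu_const_mul (E : Ω → Prop) (k : ℝ) (f : Ω → ℝ) :
    mu p E (fun ω => k * f ω) = k * mu p E f := by
  unfold mu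
  rw [Finset.mul_sum]
  refine Finset.sum_congr rfl fun ω _ => ?_
  by_cases h : E ω
  · simp [h]; ring
  · simp [h]

lemma mu_const (E : Ω → Prop) (m : ℝ) : mu p E (fun _ => m) = m * pr p E := by
  unfold mu pr
  rw [Finset.mul_sum]
  refine Finset.sum_congr rfl fun ω _ => ?_
  by_cases h : E ω
  · simp [h]; ring
  · simp [h]

lemma cexp_sub (f g : Ω → ℝ) (E : Ω → Prop) :
    cexp p (fun ω => f ω - g ω) E = cexp p f E - cexp p g E := by
  rw [cexp_def, cexp_def, cexp_def, mu_sub, sub_div]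

lemma pr_zero_forall (hp : ∀ ω, 0 ≤ p ω) {E : Ω → Prop} (h : pr p E = 0) :
    ∀ ω, E ω → p ω = 0 := by
  intro ω hω
  have hnn : ∀ x ∈ Finset.univ, (0:ℝ) ≤ if E x then p x else 0 := by
    intro x _; by_cases hx : E x <;> simp [hx, hp x]
  have := (Finset.sum_eq_zero_iff_of_nonneg hnn).mp h ω (Finset.mem_univ ω)
  rwa [if_pos hω] at this

lemma pr_ne_of_sub (hp : ∀ ω, 0 ≤ p ω) {E B : Ω → Prop}
    (h : pr p (fun ω => E ω ∧ B ω) ≠ 0) : pr p E ≠ 0 := by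
  intro h0
  apply h
  refine Finset.sum_eq_zero fun ω _ => ?_
  by_cases hω : E ω ∧ B ω
  · rw [if_pos hω, pr_zero_forall hp h0 ω hω.1]
  · rw [if_neg hω]

lemma mu_inter (E B : Ω → Prop) (f : Ω → ℝ) :
    mu p (fun ω => E ω ∧ B ω) f = mu p E (fun ω => (if B ω then (1:ℝ) else 0) * f ω) := by
  refine Finset.sum_congr rfl fun ω _ => ?_
  by_cases hE : E ω <;> by_cases hB : B ω <;> simp [hE, hB]

lemma pr_inter (E B : Ω → Prop) :
    pr p (fun ω => E ω ∧ B ω) = mu p E (fun ω => if B ω then (1:ℝ) else 0) := by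
  refine Finset.sum_congr rfl fun ω _ => ?_
  by_cases hE : E ω <;> by_cases hB : B ω <;> simp [hE, hB]

lemma mu_prod_of_indep {α β γ : Type*} {S : Ω → α} {T : Ω → β} {C : Ω → γ}
    (hCI : CondIndep p S T C) (c : γ) (hc : pr p (fun ω => C ω = c) ≠ 0)
    (F : α → ℝ) (G : β → ℝ) :
    mu p (fun ω => C ω = c) (fun ω => F (S ω) * G (T ω)) =
      pr p (fun ω => C ω = c) * (cexp p (fun ω => F (S ω)) (fun ω => C ω = c) *
        cexp p (fun ω => G (T ω)) (fun ω => C ω = c)) := by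
  have h := hCI F G c hc
  rw [cexp_def] at h
  have := div_eq_iff hc |>.mp h
  rw [this]; ring

lemma mu_prod_zero {α β γ : Type*} {S : Ω → α} {T : Ω → β} {C : Ω → γ}
    (hCI : CondIndep p S T C) (c : γ) (hc : pr p (fun ω => C ω = c) ≠ 0)
    (F : α → ℝ) (G : β → ℝ)
    (hG : cexp p (fun ω => G (T ω)) (fun ω => C ω = c) = 0) :
    mu p (fun ω => C ω = c) (fun ω => F (S ω) * G (T ω)) = 0 := by
  rw [mu_prod_of_indep hCI c hc F G, hG, mul_zero, mul_zero]

lemma cexp_restrict {α β γ : Type*} {S : Ω → α} {T : Ω → β} {C : Ω → γ}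
    (hCI : CondIndep p S T C) (hp : ∀ ω, 0 ≤ p ω) (c : γ) (B : α → Prop)
    (hsub : pr p (fun ω => C ω = c ∧ B (S ω)) ≠ 0) (G : β → ℝ) :
    cexp p (fun ω => G (T ω)) (fun ω => C ω = c ∧ B (S ω)) =
      cexp p (fun ω => G (T ω)) (fun ω => C ω = c) := by
  have hc : pr p (fun ω => C ω = c) ≠ 0 := pr_ne_of_sub hp hsub
  have hmu : mu p (fun ω => C ω = c ∧ B (S ω)) (fun ω => G (T ω)) =
      pr p (fun ω => C ω = c ∧ B (S ω)) *
        cexp p (fun ω => G (T ω)) (fun ω => C ω = c) := by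
    rw [mu_inter]
    have h1 : mu p (fun ω => C ω = c)
        (fun ω => (if B (S ω) then (1:ℝ) else 0) * G (T ω)) =
        pr p (fun ω => C ω = c) *
          (cexp p (fun ω => (fun a => if B a then (1:ℝ) else 0) (S ω)) (fun ω => C ω = c) *
            cexp p (fun ω => G (T ω)) (fun ω => C ω = c)) :=
      mu_prod_of_indep hCI c hc (fun a => if B a then (1:ℝ) else 0) G
    rw [h1]
    have h2 : pr p (fun ω => C ω = c ∧ B (S ω)) =
        pr p (fun ω => C ω = c) *
          cexp p (fun ω => (fun a => if B a then (1:ℝ) else 0) (S ω)) (fun ω => C ω = c) := by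
      rw [pr_inter, cexp_def, mul_div_cancel₀]
      exact hc
    rw [h2]; ring
  rw [cexp_def, hmu, mul_comm, mul_div_assoc, div_self hsub, mul_one]

lemma strata {γ : Type*} (hp : ∀ ω, 0 ≤ p ω) (C : Ω → γ) (f : Ω → ℝ)
    (h : ∀ s, pr p (fun ω => C ω = s) ≠ 0 → mu p (fun ω => C ω = s) f = 0) :
    ∑ ω, p ω * f ω = 0 := by
  classical
  have hfib : ∑ ω, p ω * f ω = ∑ s ∈ Finset.univ.image C,
      ∑ ω ∈ Finset.univ.filter (fun ω => C ω = s), p ω * f ω := by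
    rw [Finset.sum_fiberwise_of_maps_to (fun x _ => Finset.mem_image_of_mem C (Finset.mem_univ x))]
  rw [hfib]
  refine Finset.sum_eq_zero fun s _ => ?_
  rw [Finset.sum_filter]
  by_cases hs : pr p (fun ω => C ω = s) = 0
  · refine Finset.sum_eq_zero fun ω _ => ?_
    by_cases hC : C ω = s
    · rw [if_pos hC, pr_zero_forall hp hs ω hC, zero_mul]
    · rw [if_neg hC]
  · exact h s hs

lemma cprob_num_ne {E F : Ω → Prop} (h : 0 < cprob p E F) :
    pr p (fun ω => E ω ∧ F ω) ≠ 0 := by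
  intro h0
  rw [cprob, h0, zero_div] at h
  exact lt_irrefl 0 h

end helpers

/-- unbiasedness of the doubly-robust-form estimating function when all
confounding bridge functions satisfy their latent-level bridge equations:
`E[Ξ_{ā(1)} | V] = E[Y_{ā(1)} | V]`, and consequently, under the MSMM
`E[Y_{ā(1)} | V] = g(ā(1), V; β*)`, the moment condition
`E[Σ_{ā(1)∈𝒜} d(ā(1), V)(Ξ_{ā(1)} − g(ā(1), V; β*))] = 0` holds for every `d`. -/
theorem stmt_12 {Ω 𝒳0 𝒳1 𝒵0 𝒵1 𝒲0 𝒲1 𝒰0 𝒰1 𝒱 : Type*} [Fintype Ω]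
    (p : Ω → ℝ) (hp : ∀ ω, 0 ≤ p ω) (hsum : ∑ ω, p ω = 1)
    (A0 A1 : Ω → Bool) (X0 : Ω → 𝒳0) (X1 : Ω → 𝒳1)
    (Z0 : Ω → 𝒵0) (Z1 : Ω → 𝒵1) (W0 : Ω → 𝒲0) (W1 : Ω → 𝒲1)
    (U0 : Ω → 𝒰0) (U1 : Ω → 𝒰1)
    (Y : Ω → ℝ) (Y' : Bool → Bool → Ω → ℝ) (W1' : Bool → Ω → 𝒲1)
    (h1 : 𝒲0 × 𝒲1 → Bool × Bool → 𝒳0 × 𝒳1 → ℝ)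
    (h0 : 𝒲0 → Bool × Bool → 𝒳0 → ℝ)
    (q0 : 𝒵0 → Bool → 𝒳0 → ℝ)
    (q1 : 𝒵0 × 𝒵1 → Bool × Bool → 𝒳0 × 𝒳1 → ℝ)
    (v : 𝒳0 → 𝒱)
    -- consistency and positivity
    (hconsY : ∀ ω, Y ω = Y' (A0 ω) (A1 ω) ω)
    (hconsW : ∀ ω, W1 ω = W1' (A0 ω) ω)
    (hpos0 : ∀ (a : Bool) u0 x0, pr p (fun ω => U0 ω = u0 ∧ X0 ω = x0) ≠ 0 →
      0 < cprob p (fun ω => A0 ω = a) (fun ω => U0 ω = u0 ∧ X0 ω = x0))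
    (hpos1 : ∀ (a a' : Bool) u0 u1 x0 x1,
      pr p (fun ω => A0 ω = a' ∧ U0 ω = u0 ∧ U1 ω = u1 ∧ X0 ω = x0 ∧ X1 ω = x1) ≠ 0 →
      0 < cprob p (fun ω => A1 ω = a)
        (fun ω => A0 ω = a' ∧ U0 ω = u0 ∧ U1 ω = u1 ∧ X0 ω = x0 ∧ X1 ω = x1))
    -- sequential proximal latent randomization
    (hLR1 : ∀ b0 b1 : Bool, CondIndep p (fun ω => (Z0 ω, Z1 ω, A1 ω))
      (fun ω => (W0 ω, W1' b0 ω, Y' b0 b1 ω))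
      (fun ω => (A0 ω, X0 ω, X1 ω, U0 ω, U1 ω)))
    (hLR0 : ∀ b0 b1 : Bool, CondIndep p (fun ω => (Z0 ω, A0 ω))
      (fun ω => (W0 ω, Y' b0 b1 ω)) (fun ω => (X0 ω, U0 ω)))
    -- latent-level outcome bridge equations for (h1, h0)
    (hbridgeh1 : ∀ (b0 b1 : Bool) u0 u1 x0 x1,
      pr p (fun ω => A0 ω = b0 ∧ A1 ω = b1 ∧ U0 ω = u0 ∧ U1 ω = u1 ∧
        X0 ω = x0 ∧ X1 ω = x1) ≠ 0 →
      cexp p (fun ω => h1 (W0 ω, W1 ω) (b0, b1) (X0 ω, X1 ω))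
          (fun ω => A0 ω = b0 ∧ A1 ω = b1 ∧ U0 ω = u0 ∧ U1 ω = u1 ∧
            X0 ω = x0 ∧ X1 ω = x1) =
        cexp p Y (fun ω => A0 ω = b0 ∧ A1 ω = b1 ∧ U0 ω = u0 ∧ U1 ω = u1 ∧
          X0 ω = x0 ∧ X1 ω = x1))
    (hbridgeh0 : ∀ (b0 b1 : Bool) u0 x0,
      pr p (fun ω => A0 ω = b0 ∧ U0 ω = u0 ∧ X0 ω = x0) ≠ 0 →
      cexp p (Y' b0 b1) (fun ω => A0 ω = b0 ∧ U0 ω = u0 ∧ X0 ω = x0) =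
        cexp p (fun ω => h0 (W0 ω) (b0, b1) (X0 ω))
          (fun ω => A0 ω = b0 ∧ U0 ω = u0 ∧ X0 ω = x0))
    -- latent-level treatment bridge equations for (q0, q1)
    (hbridgeq0 : ∀ (b0 : Bool) u0 x0,
      pr p (fun ω => A0 ω = b0 ∧ U0 ω = u0 ∧ X0 ω = x0) ≠ 0 →
      (cprob p (fun ω => A0 ω = b0) (fun ω => U0 ω = u0 ∧ X0 ω = x0))⁻¹ =
        cexp p (fun ω => q0 (Z0 ω) b0 (X0 ω))
          (fun ω => A0 ω = b0 ∧ U0 ω = u0 ∧ X0 ω = x0))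
    (hbridgeq1 : ∀ (b0 b1 : Bool) u0 u1 x0 x1,
      pr p (fun ω => A0 ω = b0 ∧ A1 ω = b1 ∧ U0 ω = u0 ∧ U1 ω = u1 ∧
        X0 ω = x0 ∧ X1 ω = x1) ≠ 0 →
      cexp p (fun ω => q0 (Z0 ω) b0 (X0 ω))
          (fun ω => A0 ω = b0 ∧ U0 ω = u0 ∧ U1 ω = u1 ∧ X0 ω = x0 ∧ X1 ω = x1) /
        cprob p (fun ω => A1 ω = b1)
          (fun ω => A0 ω = b0 ∧ U0 ω = u0 ∧ U1 ω = u1 ∧ X0 ω = x0 ∧ X1 ω = x1) =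
      cexp p (fun ω => q1 (Z0 ω, Z1 ω) (b0, b1) (X0 ω, X1 ω))
        (fun ω => A0 ω = b0 ∧ A1 ω = b1 ∧ U0 ω = u0 ∧ U1 ω = u1 ∧
          X0 ω = x0 ∧ X1 ω = x1))
    -- the augmented (doubly-robust) estimating function Ξ
    (Xi : Bool × Bool → Ω → ℝ)
    (hXi : ∀ (b0 b1 : Bool) ω, Xi (b0, b1) ω =
      (if A0 ω = b0 ∧ A1 ω = b1 then (1 : ℝ) else 0) *
          q1 (Z0 ω, Z1 ω) (b0, b1) (X0 ω, X1 ω) *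
          (Y ω - h1 (W0 ω, W1 ω) (b0, b1) (X0 ω, X1 ω)) +
        (if A0 ω = b0 then (1 : ℝ) else 0) * q0 (Z0 ω) b0 (X0 ω) *
          (h1 (W0 ω, W1 ω) (b0, b1) (X0 ω, X1 ω) - h0 (W0 ω) (b0, b1) (X0 ω)) +
        h0 (W0 ω) (b0, b1) (X0 ω))
    -- the MSMM
    (g : Bool × Bool → 𝒱 → ℝ)
    (hmsmm : ∀ (b0 b1 : Bool) (c : 𝒱), pr p (fun ω => v (X0 ω) = c) ≠ 0 →
      cexp p (Y' b0 b1) (fun ω => v (X0 ω) = c) = g (b0, b1) c) :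
    (∀ (b0 b1 : Bool) (c : 𝒱), pr p (fun ω => v (X0 ω) = c) ≠ 0 →
      cexp p (Xi (b0, b1)) (fun ω => v (X0 ω) = c) =
        cexp p (Y' b0 b1) (fun ω => v (X0 ω) = c)) ∧
    (∀ d : Bool × Bool → 𝒱 → ℝ,
      pexp p (fun ω => ∑ b : Bool × Bool,
        d b (v (X0 ω)) * (Xi b ω - g b (v (X0 ω)))) = 0) := by
  have key : ∀ (b0 b1 : Bool) (φ : 𝒱 → ℝ),
      (∑ ω, p ω * (φ (v (X0 ω)) * (Xi (b0, b1) ω - Y' b0 b1 ω))) = 0 := by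
    intro b0 b1 φ
    -- ===== Part M1 : the (q1, h1) term vanishes =====
    have hM1 : ∑ ω, p ω * (φ (v (X0 ω)) *
        ((if A0 ω = b0 ∧ A1 ω = b1 then (1 : ℝ) else 0) *
            q1 (Z0 ω, Z1 ω) (b0, b1) (X0 ω, X1 ω) *
            (Y ω - h1 (W0 ω, W1 ω) (b0, b1) (X0 ω, X1 ω)) +
          (if A0 ω = b0 then (1 : ℝ) else 0) * q0 (Z0 ω) b0 (X0 ω) *
            (h1 (W0 ω, W1 ω) (b0, b1) (X0 ω, X1 ω) - Y' b0 b1 ω))) = 0 := by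
      refine strata hp (fun ω => (A0 ω, X0 ω, X1 ω, U0 ω, U1 ω)) _ ?_
      rintro ⟨a0, x0, x1, u0, u1⟩ hs
      by_cases hb : a0 = b0
      · subst hb
        -- positivity of the sub-event with A1 = b1
        have hiff1 : ∀ ω, (A0 ω = a0 ∧ U0 ω = u0 ∧ U1 ω = u1 ∧ X0 ω = x0 ∧ X1 ω = x1) ↔
            ((A0 ω, X0 ω, X1 ω, U0 ω, U1 ω) = (a0, x0, x1, u0, u1)) := by
          intro ω; simp only [Prod.mk.injEq]; tauto
        have hprconj : pr p (fun ω => A0 ω = a0 ∧ U0 ω = u0 ∧ U1 ω = u1 ∧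
            X0 ω = x0 ∧ X1 ω = x1) ≠ 0 := by
          rw [pr_congr hiff1]; exact hs
        have hnum := cprob_num_ne (hpos1 b1 a0 u0 u1 x0 x1 hprconj)
        have hiff2 : ∀ ω, ((A0 ω, X0 ω, X1 ω, U0 ω, U1 ω) = (a0, x0, x1, u0, u1) ∧
            A1 ω = b1) ↔ (A1 ω = b1 ∧ (A0 ω = a0 ∧ U0 ω = u0 ∧ U1 ω = u1 ∧
              X0 ω = x0 ∧ X1 ω = x1)) := by
          intro ω; simp only [Prod.mk.injEq]; tauto
        have hsub : pr p (fun ω => (A0 ω, X0 ω, X1 ω, U0 ω, U1 ω) = (a0, x0, x1, u0, u1) ∧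
            A1 ω = b1) ≠ 0 := by
          rw [pr_congr hiff2]; exact hnum
        have hiff3 : ∀ ω, ((A0 ω, X0 ω, X1 ω, U0 ω, U1 ω) = (a0, x0, x1, u0, u1) ∧
            A1 ω = b1) ↔ (A0 ω = a0 ∧ A1 ω = b1 ∧ U0 ω = u0 ∧ U1 ω = u1 ∧
              X0 ω = x0 ∧ X1 ω = x1) := by
          intro ω; simp only [Prod.mk.injEq]; tauto
        have hprbr : pr p (fun ω => A0 ω = a0 ∧ A1 ω = b1 ∧ U0 ω = u0 ∧ U1 ω = u1 ∧
            X0 ω = x0 ∧ X1 ω = x1) ≠ 0 := by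
          rw [← pr_congr hiff3]; exact hsub
        -- restriction identities from conditional independence
        have e1 : cexp p (fun ω => Y' a0 b1 ω)
            (fun ω => (A0 ω, X0 ω, X1 ω, U0 ω, U1 ω) = (a0, x0, x1, u0, u1) ∧ A1 ω = b1) =
            cexp p (fun ω => Y' a0 b1 ω)
              (fun ω => (A0 ω, X0 ω, X1 ω, U0 ω, U1 ω) = (a0, x0, x1, u0, u1)) :=
          cexp_restrict (hLR1 a0 b1) hp (a0, x0, x1, u0, u1)
            (fun t => t.2.2 = b1) hsub (fun t => t.2.2)
        have e2 : cexp p (fun ω => h1 (W0 ω, W1' a0 ω) (a0, b1) (x0, x1))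
            (fun ω => (A0 ω, X0 ω, X1 ω, U0 ω, U1 ω) = (a0, x0, x1, u0, u1) ∧ A1 ω = b1) =
            cexp p (fun ω => h1 (W0 ω, W1' a0 ω) (a0, b1) (x0, x1))
              (fun ω => (A0 ω, X0 ω, X1 ω, U0 ω, U1 ω) = (a0, x0, x1, u0, u1)) :=
          cexp_restrict (hLR1 a0 b1) hp (a0, x0, x1, u0, u1)
            (fun t => t.2.2 = b1) hsub (fun t => h1 (t.1, t.2.1) (a0, b1) (x0, x1))
        -- transfer to the bridge event
        have c1 : cexp p (fun ω => Y' a0 b1 ω)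
            (fun ω => (A0 ω, X0 ω, X1 ω, U0 ω, U1 ω) = (a0, x0, x1, u0, u1) ∧ A1 ω = b1) =
            cexp p Y (fun ω => A0 ω = a0 ∧ A1 ω = b1 ∧ U0 ω = u0 ∧ U1 ω = u1 ∧
              X0 ω = x0 ∧ X1 ω = x1) := by
          refine cexp_congr hiff3 ?_
          intro ω hω
          rw [hconsY ω, hω.1, hω.2.1]
        have c2 : cexp p (fun ω => h1 (W0 ω, W1' a0 ω) (a0, b1) (x0, x1))
            (fun ω => (A0 ω, X0 ω, X1 ω, U0 ω, U1 ω) = (a0, x0, x1, u0, u1) ∧ A1 ω = b1) =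
            cexp p (fun ω => h1 (W0 ω, W1 ω) (a0, b1) (X0 ω, X1 ω))
              (fun ω => A0 ω = a0 ∧ A1 ω = b1 ∧ U0 ω = u0 ∧ U1 ω = u1 ∧
                X0 ω = x0 ∧ X1 ω = x1) := by
          refine cexp_congr hiff3 ?_
          intro ω hω
          rw [hconsW ω, hω.1, hω.2.2.2.2.1, hω.2.2.2.2.2]
        have hbr1 : cexp p (fun ω => Y' a0 b1 ω)
            (fun ω => (A0 ω, X0 ω, X1 ω, U0 ω, U1 ω) = (a0, x0, x1, u0, u1)) =
            cexp p (fun ω => h1 (W0 ω, W1' a0 ω) (a0, b1) (x0, x1))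
              (fun ω => (A0 ω, X0 ω, X1 ω, U0 ω, U1 ω) = (a0, x0, x1, u0, u1)) := by
          rw [← e1, ← e2, c1, c2]
          exact (hbridgeh1 a0 b1 u0 u1 x0 x1 hprbr).symm
        have hG0 : cexp p (fun ω => Y' a0 b1 ω - h1 (W0 ω, W1' a0 ω) (a0, b1) (x0, x1))
            (fun ω => (A0 ω, X0 ω, X1 ω, U0 ω, U1 ω) = (a0, x0, x1, u0, u1)) = 0 := by
          rw [cexp_sub, hbr1, sub_self]
        have hz : mu p (fun ω => (A0 ω, X0 ω, X1 ω, U0 ω, U1 ω) = (a0, x0, x1, u0, u1))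
            (fun ω => ((if A1 ω = b1 then (1:ℝ) else 0) *
                q1 (Z0 ω, Z1 ω) (a0, b1) (x0, x1) - q0 (Z0 ω) a0 x0) *
              (Y' a0 b1 ω - h1 (W0 ω, W1' a0 ω) (a0, b1) (x0, x1))) = 0 :=
          mu_prod_zero (hLR1 a0 b1) (a0, x0, x1, u0, u1) hs
            (fun t => (if t.2.2 = b1 then (1:ℝ) else 0) *
              q1 (t.1, t.2.1) (a0, b1) (x0, x1) - q0 t.1 a0 x0)
            (fun t => t.2.2 - h1 (t.1, t.2.1) (a0, b1) (x0, x1)) hG0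
        have hpt : ∀ ω, ((A0 ω, X0 ω, X1 ω, U0 ω, U1 ω) = (a0, x0, x1, u0, u1)) →
            φ (v (X0 ω)) *
              ((if A0 ω = a0 ∧ A1 ω = b1 then (1 : ℝ) else 0) *
                  q1 (Z0 ω, Z1 ω) (a0, b1) (X0 ω, X1 ω) *
                  (Y ω - h1 (W0 ω, W1 ω) (a0, b1) (X0 ω, X1 ω)) +
                (if A0 ω = a0 then (1 : ℝ) else 0) * q0 (Z0 ω) a0 (X0 ω) *
                  (h1 (W0 ω, W1 ω) (a0, b1) (X0 ω, X1 ω) - Y' a0 b1 ω)) =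
            φ (v x0) * (((if A1 ω = b1 then (1:ℝ) else 0) *
                q1 (Z0 ω, Z1 ω) (a0, b1) (x0, x1) - q0 (Z0 ω) a0 x0) *
              (Y' a0 b1 ω - h1 (W0 ω, W1' a0 ω) (a0, b1) (x0, x1))) := by
          intro ω hω
          simp only [Prod.mk.injEq] at hω
          obtain ⟨hA0, hX0, hX1, hU0, hU1⟩ := hω
          rw [hconsY ω, hconsW ω, hA0, hX0, hX1]
          by_cases hA1 : A1 ω = b1
          · rw [hA1]; simp only [eq_self_iff_true, and_self, if_true]; ring
          · simp only [hA1, eq_self_iff_true, and_true, true_and, and_false, if_false, if_true]; ring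
        refine (mu_congr (fun _ => Iff.rfl) hpt).trans ?_
        rw [mu_const_mul, hz, mul_zero]
      · -- stratum with a0 ≠ b0 : integrand vanishes
        refine (mu_congr (fun _ => Iff.rfl) (g := fun _ => (0:ℝ)) ?_).trans ?_
        · intro ω hω
          simp only [Prod.mk.injEq] at hω
          obtain ⟨hA0, hX0, hX1, hU0, hU1⟩ := hω
          simp [hA0, hb]
        · rw [mu_const, zero_mul]
    -- ===== Part M2 : the (q0, h0) term vanishes =====
    have hM2 : ∑ ω, p ω * (φ (v (X0 ω)) *
        ((if A0 ω = b0 then (1 : ℝ) else 0) * q0 (Z0 ω) b0 (X0 ω) *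
            (Y' b0 b1 ω - h0 (W0 ω) (b0, b1) (X0 ω)) +
          h0 (W0 ω) (b0, b1) (X0 ω) - Y' b0 b1 ω)) = 0 := by
      refine strata hp (fun ω => (X0 ω, U0 ω)) _ ?_
      rintro ⟨x0, u0⟩ hs
      have hiff1 : ∀ ω, (U0 ω = u0 ∧ X0 ω = x0) ↔ ((X0 ω, U0 ω) = (x0, u0)) := by
        intro ω; simp only [Prod.mk.injEq]; tauto
      have hprconj : pr p (fun ω => U0 ω = u0 ∧ X0 ω = x0) ≠ 0 := by
        rw [pr_congr hiff1]; exact hs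
      have hnum := cprob_num_ne (hpos0 b0 u0 x0 hprconj)
      have hiff2 : ∀ ω, ((X0 ω, U0 ω) = (x0, u0) ∧ A0 ω = b0) ↔
          (A0 ω = b0 ∧ (U0 ω = u0 ∧ X0 ω = x0)) := by
        intro ω; simp only [Prod.mk.injEq]; tauto
      have hsub : pr p (fun ω => (X0 ω, U0 ω) = (x0, u0) ∧ A0 ω = b0) ≠ 0 := by
        rw [pr_congr hiff2]; exact hnum
      have hiff3 : ∀ ω, ((X0 ω, U0 ω) = (x0, u0) ∧ A0 ω = b0) ↔
          (A0 ω = b0 ∧ U0 ω = u0 ∧ X0 ω = x0) := by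
        intro ω; simp only [Prod.mk.injEq]; tauto
      have hprbr : pr p (fun ω => A0 ω = b0 ∧ U0 ω = u0 ∧ X0 ω = x0) ≠ 0 := by
        rw [← pr_congr hiff3]; exact hsub
      have e1 : cexp p (fun ω => Y' b0 b1 ω)
          (fun ω => (X0 ω, U0 ω) = (x0, u0) ∧ A0 ω = b0) =
          cexp p (fun ω => Y' b0 b1 ω) (fun ω => (X0 ω, U0 ω) = (x0, u0)) :=
        cexp_restrict (hLR0 b0 b1) hp (x0, u0) (fun t => t.2 = b0) hsub (fun t => t.2)
      have e2 : cexp p (fun ω => h0 (W0 ω) (b0, b1) x0)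
          (fun ω => (X0 ω, U0 ω) = (x0, u0) ∧ A0 ω = b0) =
          cexp p (fun ω => h0 (W0 ω) (b0, b1) x0) (fun ω => (X0 ω, U0 ω) = (x0, u0)) :=
        cexp_restrict (hLR0 b0 b1) hp (x0, u0) (fun t => t.2 = b0) hsub
          (fun t => h0 t.1 (b0, b1) x0)
      have c1 : cexp p (fun ω => Y' b0 b1 ω)
          (fun ω => (X0 ω, U0 ω) = (x0, u0) ∧ A0 ω = b0) =
          cexp p (Y' b0 b1) (fun ω => A0 ω = b0 ∧ U0 ω = u0 ∧ X0 ω = x0) :=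
        cexp_congr hiff3 (fun ω _ => rfl)
      have c2 : cexp p (fun ω => h0 (W0 ω) (b0, b1) x0)
          (fun ω => (X0 ω, U0 ω) = (x0, u0) ∧ A0 ω = b0) =
          cexp p (fun ω => h0 (W0 ω) (b0, b1) (X0 ω))
            (fun ω => A0 ω = b0 ∧ U0 ω = u0 ∧ X0 ω = x0) := by
        refine cexp_congr hiff3 ?_
        intro ω hω
        rw [hω.2.2]
      have hbr0 : cexp p (fun ω => Y' b0 b1 ω) (fun ω => (X0 ω, U0 ω) = (x0, u0)) =
          cexp p (fun ω => h0 (W0 ω) (b0, b1) x0) (fun ω => (X0 ω, U0 ω) = (x0, u0)) := by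
        rw [← e1, ← e2, c1, c2]
        exact hbridgeh0 b0 b1 u0 x0 hprbr
      have hG0 : cexp p (fun ω => Y' b0 b1 ω - h0 (W0 ω) (b0, b1) x0)
          (fun ω => (X0 ω, U0 ω) = (x0, u0)) = 0 := by
        rw [cexp_sub, hbr0, sub_self]
      have hz : mu p (fun ω => (X0 ω, U0 ω) = (x0, u0))
          (fun ω => ((if A0 ω = b0 then (1:ℝ) else 0) * q0 (Z0 ω) b0 x0 - 1) *
            (Y' b0 b1 ω - h0 (W0 ω) (b0, b1) x0)) = 0 :=
        mu_prod_zero (hLR0 b0 b1) (x0, u0) hs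
          (fun t => (if t.2 = b0 then (1:ℝ) else 0) * q0 t.1 b0 x0 - 1)
          (fun t => t.2 - h0 t.1 (b0, b1) x0) hG0
      have hpt : ∀ ω, ((X0 ω, U0 ω) = (x0, u0)) →
          φ (v (X0 ω)) *
            ((if A0 ω = b0 then (1 : ℝ) else 0) * q0 (Z0 ω) b0 (X0 ω) *
                (Y' b0 b1 ω - h0 (W0 ω) (b0, b1) (X0 ω)) +
              h0 (W0 ω) (b0, b1) (X0 ω) - Y' b0 b1 ω) =
          φ (v x0) * (((if A0 ω = b0 then (1:ℝ) else 0) * q0 (Z0 ω) b0 x0 - 1) *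
            (Y' b0 b1 ω - h0 (W0 ω) (b0, b1) x0)) := by
        intro ω hω
        simp only [Prod.mk.injEq] at hω
        rw [hω.1]
        ring
      refine (mu_congr (fun _ => Iff.rfl) hpt).trans ?_
      rw [mu_const_mul, hz, mul_zero]
    -- ===== combine =====
    have hsplit : ∀ ω, p ω * (φ (v (X0 ω)) * (Xi (b0, b1) ω - Y' b0 b1 ω)) =
        p ω * (φ (v (X0 ω)) *
          ((if A0 ω = b0 ∧ A1 ω = b1 then (1 : ℝ) else 0) *
              q1 (Z0 ω, Z1 ω) (b0, b1) (X0 ω, X1 ω) *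
              (Y ω - h1 (W0 ω, W1 ω) (b0, b1) (X0 ω, X1 ω)) +
            (if A0 ω = b0 then (1 : ℝ) else 0) * q0 (Z0 ω) b0 (X0 ω) *
              (h1 (W0 ω, W1 ω) (b0, b1) (X0 ω, X1 ω) - Y' b0 b1 ω))) +
        p ω * (φ (v (X0 ω)) *
          ((if A0 ω = b0 then (1 : ℝ) else 0) * q0 (Z0 ω) b0 (X0 ω) *
              (Y' b0 b1 ω - h0 (W0 ω) (b0, b1) (X0 ω)) +
            h0 (W0 ω) (b0, b1) (X0 ω) - Y' b0 b1 ω)) := by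
      intro ω
      rw [hXi b0 b1 ω]
      ring
    rw [Finset.sum_congr rfl (fun ω _ => hsplit ω), Finset.sum_add_distrib, hM1, hM2, add_zero]
  constructor
  · -- first conjunct
    intro b0 b1 c hprV
    have hk := key b0 b1 (fun x => if x = c then (1:ℝ) else 0)
    have hmu0 : mu p (fun ω => v (X0 ω) = c)
        (fun ω => Xi (b0, b1) ω - Y' b0 b1 ω) = 0 := by
      refine Eq.trans ?_ hk
      unfold mu
      refine Finset.sum_congr rfl fun ω _ => ?_
      by_cases hc2 : v (X0 ω) = c <;> simp [hc2]
    rw [mu_sub] at hmu0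
    have hmuEq : mu p (fun ω => v (X0 ω) = c) (Xi (b0, b1)) =
        mu p (fun ω => v (X0 ω) = c) (Y' b0 b1) := sub_eq_zero.mp hmu0
    rw [cexp_def, cexp_def, hmuEq]
  · -- second conjunct
    intro d
    unfold pexp
    have hswap : ∀ ω, p ω * (∑ b : Bool × Bool,
        d b (v (X0 ω)) * (Xi b ω - g b (v (X0 ω)))) =
        ∑ b : Bool × Bool, p ω * (d b (v (X0 ω)) * (Xi b ω - g b (v (X0 ω)))) :=
      fun ω => Finset.mul_sum _ _ _
    rw [Finset.sum_congr rfl (fun ω _ => hswap ω), Finset.sum_comm]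
    refine Finset.sum_eq_zero fun b _ => ?_
    obtain ⟨b0, b1⟩ := b
    have hsplit : ∀ ω, p ω * (d (b0, b1) (v (X0 ω)) *
        (Xi (b0, b1) ω - g (b0, b1) (v (X0 ω)))) =
        p ω * (d (b0, b1) (v (X0 ω)) * (Xi (b0, b1) ω - Y' b0 b1 ω)) +
        p ω * (d (b0, b1) (v (X0 ω)) * (Y' b0 b1 ω - g (b0, b1) (v (X0 ω)))) :=
      fun ω => by ring
    rw [Finset.sum_congr rfl (fun ω _ => hsplit ω), Finset.sum_add_distrib,
      key b0 b1 (d (b0, b1)), zero_add]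
    refine strata hp (fun ω => v (X0 ω)) _ ?_
    intro cc hcc
    have step : mu p (fun ω => v (X0 ω) = cc)
        (fun ω => d (b0, b1) (v (X0 ω)) * (Y' b0 b1 ω - g (b0, b1) (v (X0 ω)))) =
        mu p (fun ω => v (X0 ω) = cc)
          (fun ω => d (b0, b1) cc * (Y' b0 b1 ω - g (b0, b1) cc)) :=
      mu_congr (fun _ => Iff.rfl) (fun ω hω => by rw [hω])
    refine step.trans ?_
    rw [mu_const_mul]
    have hmuY : mu p (fun ω => v (X0 ω) = cc)
        (fun ω => Y' b0 b1 ω - g (b0, b1) cc) = 0 := by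
      rw [mu_sub, mu_const]
      have : mu p (fun ω => v (X0 ω) = cc) (Y' b0 b1) =
          cexp p (Y' b0 b1) (fun ω => v (X0 ω) = cc) * pr p (fun ω => v (X0 ω) = cc) := by
        rw [cexp_def, div_mul_cancel₀ _ hcc]
      rw [this, hmsmm b0 b1 cc hcc, sub_self]
    rw [hmuY, mul_zero]
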